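/- Let T > 0. For every s ∈ ℝ, q ∈ [0,1], t ∈ [0,T] and pair X = (u,v) ∈ ℍ^{s+q}, the wave group satisfies ‖(E(t) − I)X‖_{ℍ^s} ≤ max(4, 2T) t^q ‖X‖_{ℍ^{s+q}}. (Lemma 2.2, group estimate) -/
import Mathlib


open scoped BigOperators
open Filter MeasureTheory

noncomputable section

/-- Coefficient sequences `u = (u^{ℓ,m})` with respect to the spherical harmonics,
indexed by degree `ℓ ∈ ℕ` and order `m ∈ {-ℓ,…,ℓ}` (encoded as `Fin (2ℓ+1)`). -/
abbrev Coef := (ℓ : ℕ) → Fin (2 * ℓ + 1) → ℂ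

/-- Eigenvalue `ℓ(ℓ+1)` of `-Δ_{𝕊²}`. -/
def lam (ℓ : ℕ) : ℝ := ℓ * (ℓ + 1)

/-- Squared `H^s(𝕊²)` norm: `∑_{ℓ,m} (1+ℓ(ℓ+1))^s |u^{ℓ,m}|²`. -/
def hnormSq (s : ℝ) (u : Coef) : ℝ :=
  ∑' ℓ : ℕ, ∑ m : Fin (2 * ℓ + 1), (1 + lam ℓ) ^ s * ‖u ℓ m‖ ^ 2

/-- Membership `u ∈ H^s(𝕊²)`: the defining series converges. -/
def memH (s : ℝ) (u : Coef) : Prop :=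
  Summable (fun ℓ : ℕ => ∑ m : Fin (2 * ℓ + 1), (1 + lam ℓ) ^ s * ‖u ℓ m‖ ^ 2)

/-- `H^s(𝕊²)` norm. -/
def hnorm (s : ℝ) (u : Coef) : ℝ := Real.sqrt (hnormSq s u)

/-- The cosine operator `C(t) = cos(t(-Δ)^{1/2})`: multiplication of the
`(ℓ,m)` coefficient by `cos(t√(ℓ(ℓ+1)))`. -/
def cosOp (t : ℝ) (u : Coef) : Coef :=
  fun ℓ m => ((Real.cos (t * Real.sqrt (lam ℓ)) : ℝ) : ℂ) * u ℓ m

/-- The operator `(-Δ)^{-1/2} S(t)` with `S(t) = sin(t(-Δ)^{1/2})`: multiplication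
by `t` for `ℓ = 0` and by `sin(t√(ℓ(ℓ+1)))/√(ℓ(ℓ+1))` for `ℓ ≥ 1`. -/
def sincOp (t : ℝ) (v : Coef) : Coef :=
  fun ℓ m => if ℓ = 0 then (t : ℂ) * v ℓ m
    else ((Real.sin (t * Real.sqrt (lam ℓ)) / Real.sqrt (lam ℓ) : ℝ) : ℂ) * v ℓ m

/-- The operator `(-Δ)^{1/2} S(t)`: multiplication by `√(ℓ(ℓ+1)) sin(t√(ℓ(ℓ+1)))`. -/
def sqrtSinOp (t : ℝ) (u : Coef) : Coef :=
  fun ℓ m => ((Real.sqrt (lam ℓ) * Real.sin (t * Real.sqrt (lam ℓ)) : ℝ) : ℂ) * u ℓ m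

/-- Squared `ℍ^s = H^s × H^{s-1}` norm of a pair. -/
def hnormPairSq (s : ℝ) (X : Coef × Coef) : ℝ := hnormSq s X.1 + hnormSq (s - 1) X.2

/-- `ℍ^s` norm of a pair. -/
def hnormPair (s : ℝ) (X : Coef × Coef) : ℝ := Real.sqrt (hnormPairSq s X)

/-- Membership `X ∈ ℍ^s = H^s × H^{s-1}`. -/
def memHPair (s : ℝ) (X : Coef × Coef) : Prop := memH s X.1 ∧ memH (s - 1) X.2

/-- The wave group `E(t)(u,v) = (C(t)u + (-Δ)^{-1/2}S(t)v, -(-Δ)^{1/2}S(t)u + C(t)v)`. -/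
def waveGroup (t : ℝ) (X : Coef × Coef) : Coef × Coef :=
  (cosOp t X.1 + sincOp t X.2, -sqrtSinOp t X.1 + cosOp t X.2)

/-- The truncation projection `P_κ`: keeps coefficients with `ℓ ≤ κ`. -/
def projOp (κ : ℕ) (u : Coef) : Coef := fun ℓ m => if ℓ ≤ κ then u ℓ m else 0


private lemma min_le_rpow_mul {q a b : ℝ} (hq0 : 0 ≤ q) (hq1 : q ≤ 1) (ha : 0 ≤ a) (hb : 0 ≤ b) :
    min a b ≤ a ^ (1 - q) * b ^ q := by
  rcases eq_or_lt_of_le ha with h | ha'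
  · have : min a b ≤ 0 := (min_le_left a b).trans h.symm.le
    exact this.trans (mul_nonneg (Real.rpow_nonneg ha _) (Real.rpow_nonneg hb _))
  rcases eq_or_lt_of_le hb with h | hb'
  · have : min a b ≤ 0 := (min_le_right a b).trans h.symm.le
    exact this.trans (mul_nonneg (Real.rpow_nonneg ha _) (Real.rpow_nonneg hb _))
  have hm : 0 < min a b := lt_min ha' hb'
  calc min a b = min a b ^ (1 - q) * min a b ^ q := by
        rw [← Real.rpow_add hm, show (1 - q) + q = 1 by ring, Real.rpow_one]
    _ ≤ a ^ (1 - q) * b ^ q :=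
        mul_le_mul (Real.rpow_le_rpow hm.le (min_le_left _ _) (by linarith))
          (Real.rpow_le_rpow hm.le (min_le_right _ _) hq0)
          (Real.rpow_nonneg hm.le _) (Real.rpow_nonneg ha _)

private lemma sq_rpow_eq {x : ℝ} (hx : 0 ≤ x) (q : ℝ) : (x ^ 2) ^ q = (x ^ q) ^ 2 := by
  rw [← Real.rpow_natCast x 2, ← Real.rpow_natCast (x ^ q) 2, ← Real.rpow_mul hx,
    ← Real.rpow_mul hx]
  norm_num [mul_comm]

private lemma abs_cos_sub_one_le (x : ℝ) : |Real.cos x - 1| ≤ |x| := by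
  have h2 := Real.cos_two_mul (x / 2)
  have h3 := Real.sin_sq_add_cos_sq (x / 2)
  rw [show 2 * (x / 2) = x by ring] at h2
  have key : Real.cos x - 1 = -(2 * Real.sin (x / 2) ^ 2) := by linarith
  rw [key, abs_neg, abs_of_nonneg (by positivity)]
  have hs := Real.abs_sin_le_abs (x := x / 2)
  have hs1 : |Real.sin (x / 2)| ≤ 1 := abs_le.mpr ⟨Real.neg_one_le_sin _, Real.sin_le_one _⟩
  have hprod : |Real.sin (x / 2)| * |Real.sin (x / 2)| ≤ |x / 2| * 1 :=
    mul_le_mul hs hs1 (abs_nonneg _) (abs_nonneg _)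
  have habs : |x / 2| = |x| / 2 := by rw [abs_div]; norm_num
  rw [habs] at hprod
  nlinarith [hprod, sq_abs (Real.sin (x / 2))]

private lemma cos_sub_one_sq_le (x : ℝ) : (Real.cos x - 1) ^ 2 ≤ min 4 (x ^ 2) := by
  apply le_min
  · have h1 := Real.neg_one_le_cos x
    have h2 := Real.cos_le_one x
    nlinarith
  · have h := abs_cos_sub_one_le x
    calc (Real.cos x - 1) ^ 2 = |Real.cos x - 1| ^ 2 := (sq_abs _).symm
      _ ≤ |x| ^ 2 := by nlinarith [abs_nonneg (Real.cos x - 1)]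
      _ = x ^ 2 := sq_abs x

private lemma sin_sq_le (x : ℝ) : Real.sin x ^ 2 ≤ min 1 (x ^ 2) := by
  have h := Real.abs_sin_le_abs (x := x)
  have h1 : |Real.sin x| ≤ 1 := abs_le.mpr ⟨Real.neg_one_le_sin _, Real.sin_le_one _⟩
  apply le_min
  · calc Real.sin x ^ 2 = |Real.sin x| ^ 2 := (sq_abs _).symm
      _ ≤ 1 ^ 2 := by nlinarith [abs_nonneg (Real.sin x)]
      _ = 1 := one_pow 2
  · calc Real.sin x ^ 2 = |Real.sin x| ^ 2 := (sq_abs _).symm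
      _ ≤ |x| ^ 2 := by nlinarith [abs_nonneg (Real.sin x)]
      _ = x ^ 2 := sq_abs x

private lemma norm_combo_sq_le (c g : ℝ) (x y : ℂ) :
    ‖(c : ℂ) * x + (g : ℂ) * y‖ ^ 2 ≤ 2 * c ^ 2 * ‖x‖ ^ 2 + 2 * g ^ 2 * ‖y‖ ^ 2 := by
  have h := norm_add_le ((c : ℂ) * x) ((g : ℂ) * y)
  rw [norm_mul, norm_mul, Complex.norm_real, Complex.norm_real, Real.norm_eq_abs,
    Real.norm_eq_abs] at h
  have h2 : ‖(c : ℂ) * x + (g : ℂ) * y‖ ^ 2 ≤ (|c| * ‖x‖ + |g| * ‖y‖) ^ 2 :=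
    pow_le_pow_left₀ (norm_nonneg _) h 2
  calc ‖(c : ℂ) * x + (g : ℂ) * y‖ ^ 2 ≤ (|c| * ‖x‖ + |g| * ‖y‖) ^ 2 := h2
    _ ≤ 2 * (|c| * ‖x‖) ^ 2 + 2 * (|g| * ‖y‖) ^ 2 := by nlinarith [sq_nonneg (|c| * ‖x‖ - |g| * ‖y‖)]
    _ = 2 * c ^ 2 * ‖x‖ ^ 2 + 2 * g ^ 2 * ‖y‖ ^ 2 := by rw [mul_pow, mul_pow, sq_abs, sq_abs]; ring

private lemma lam_nonneg (ℓ : ℕ) : 0 ≤ lam ℓ := by unfold lam; positivity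

private lemma cos_term_bound {q t : ℝ} (hq0 : 0 ≤ q) (hq1 : q ≤ 1) (ht0 : 0 ≤ t) (ℓ : ℕ) :
    (Real.cos (t * Real.sqrt (lam ℓ)) - 1) ^ 2 ≤ 4 * ((t ^ q) ^ 2 * (1 + lam ℓ) ^ q) := by
  have hlam0 : (0 : ℝ) ≤ lam ℓ := lam_nonneg ℓ
  have hμ0 : 0 ≤ Real.sqrt (lam ℓ) := Real.sqrt_nonneg _
  calc (Real.cos (t * Real.sqrt (lam ℓ)) - 1) ^ 2
      ≤ min 4 ((t * Real.sqrt (lam ℓ)) ^ 2) := cos_sub_one_sq_le _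
    _ ≤ (4 : ℝ) ^ (1 - q) * ((t * Real.sqrt (lam ℓ)) ^ 2) ^ q :=
        min_le_rpow_mul hq0 hq1 (by norm_num) (sq_nonneg _)
    _ = (4 : ℝ) ^ (1 - q) * ((t ^ q) ^ 2 * lam ℓ ^ q) := by
        rw [mul_pow, Real.sq_sqrt hlam0, Real.mul_rpow (sq_nonneg t) hlam0, sq_rpow_eq ht0]
    _ ≤ 4 * ((t ^ q) ^ 2 * (1 + lam ℓ) ^ q) := by
        have h1 : (4 : ℝ) ^ (1 - q) ≤ 4 := by
          calc (4 : ℝ) ^ (1 - q) ≤ (4 : ℝ) ^ (1 : ℝ) :=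
              Real.rpow_le_rpow_of_exponent_le (by norm_num) (by linarith)
            _ = 4 := Real.rpow_one 4
        have h2 : lam ℓ ^ q ≤ (1 + lam ℓ) ^ q := Real.rpow_le_rpow hlam0 (by linarith) hq0
        exact mul_le_mul h1 (mul_le_mul_of_nonneg_left h2 (sq_nonneg _)) (by positivity)
          (by norm_num)

private lemma sin_term_bound {q t : ℝ} (hq0 : 0 ≤ q) (hq1 : q ≤ 1) (ht0 : 0 ≤ t) (ℓ : ℕ) :
    lam ℓ * Real.sin (t * Real.sqrt (lam ℓ)) ^ 2 ≤ (t ^ q) ^ 2 * (1 + lam ℓ) ^ (1 + q) := by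
  have hlam0 : (0 : ℝ) ≤ lam ℓ := lam_nonneg ℓ
  have hL0 : (0 : ℝ) < 1 + lam ℓ := by linarith
  have hs : Real.sin (t * Real.sqrt (lam ℓ)) ^ 2 ≤ (t ^ q) ^ 2 * lam ℓ ^ q := by
    calc Real.sin (t * Real.sqrt (lam ℓ)) ^ 2
        ≤ min 1 ((t * Real.sqrt (lam ℓ)) ^ 2) := sin_sq_le _
      _ ≤ (1 : ℝ) ^ (1 - q) * ((t * Real.sqrt (lam ℓ)) ^ 2) ^ q :=
          min_le_rpow_mul hq0 hq1 (by norm_num) (sq_nonneg _)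
      _ = (t ^ q) ^ 2 * lam ℓ ^ q := by
          rw [Real.one_rpow, one_mul, mul_pow, Real.sq_sqrt hlam0,
            Real.mul_rpow (sq_nonneg t) hlam0, sq_rpow_eq ht0]
  calc lam ℓ * Real.sin (t * Real.sqrt (lam ℓ)) ^ 2
      ≤ lam ℓ * ((t ^ q) ^ 2 * lam ℓ ^ q) := mul_le_mul_of_nonneg_left hs hlam0
    _ = (t ^ q) ^ 2 * (lam ℓ * lam ℓ ^ q) := by ring
    _ ≤ (t ^ q) ^ 2 * ((1 + lam ℓ) * (1 + lam ℓ) ^ q) := by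
        have h2 : lam ℓ ^ q ≤ (1 + lam ℓ) ^ q := Real.rpow_le_rpow hlam0 (by linarith) hq0
        exact mul_le_mul_of_nonneg_left
          (mul_le_mul (by linarith) h2 (Real.rpow_nonneg hlam0 q) (by linarith)) (sq_nonneg _)
    _ = (t ^ q) ^ 2 * (1 + lam ℓ) ^ (1 + q) := by rw [Real.rpow_add hL0, Real.rpow_one]

private lemma sinc_term_bound {q t : ℝ} (hq0 : 0 ≤ q) (hq1 : q ≤ 1) (ht0 : 0 ≤ t)
    {ℓ : ℕ} (hℓ : ℓ ≠ 0) :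
    (Real.sin (t * Real.sqrt (lam ℓ)) / Real.sqrt (lam ℓ)) ^ 2 * (1 + lam ℓ)
      ≤ 2 * ((t ^ q) ^ 2 * (1 + lam ℓ) ^ q) := by
  have h1le : (1 : ℝ) ≤ (ℓ : ℝ) := by exact_mod_cast Nat.one_le_iff_ne_zero.mpr hℓ
  have hlam1 : (1 : ℝ) ≤ lam ℓ := by unfold lam; nlinarith
  have hlam0 : (0 : ℝ) < lam ℓ := by linarith
  have hsq : Real.sqrt (lam ℓ) ^ 2 = lam ℓ := Real.sq_sqrt hlam0.le
  have hg2 : (Real.sin (t * Real.sqrt (lam ℓ)) / Real.sqrt (lam ℓ)) ^ 2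
      ≤ min (lam ℓ)⁻¹ (t ^ 2) := by
    rw [div_pow, hsq]
    apply le_min
    · rw [div_le_iff₀ hlam0, inv_mul_cancel₀ hlam0.ne']
      exact (sin_sq_le _).trans (min_le_left _ _)
    · rw [div_le_iff₀ hlam0]
      have := (sin_sq_le (t * Real.sqrt (lam ℓ))).trans (min_le_right _ _)
      calc Real.sin (t * Real.sqrt (lam ℓ)) ^ 2 ≤ (t * Real.sqrt (lam ℓ)) ^ 2 := this
        _ = t ^ 2 * lam ℓ := by rw [mul_pow, hsq]
  have hinterp : (Real.sin (t * Real.sqrt (lam ℓ)) / Real.sqrt (lam ℓ)) ^ 2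
      ≤ (lam ℓ ^ (1 - q))⁻¹ * (t ^ q) ^ 2 := by
    refine hg2.trans ?_
    calc min (lam ℓ)⁻¹ (t ^ 2) ≤ ((lam ℓ)⁻¹) ^ (1 - q) * (t ^ 2) ^ q :=
        min_le_rpow_mul hq0 hq1 (by positivity) (sq_nonneg t)
      _ = (lam ℓ ^ (1 - q))⁻¹ * (t ^ q) ^ 2 := by
          rw [Real.inv_rpow hlam0.le, sq_rpow_eq ht0]
  have hpow : lam ℓ ^ q = lam ℓ / lam ℓ ^ (1 - q) := by
    rw [eq_div_iff (ne_of_gt (Real.rpow_pos_of_pos hlam0 _)), ← Real.rpow_add hlam0,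
      show q + (1 - q) = 1 by ring, Real.rpow_one]
  calc (Real.sin (t * Real.sqrt (lam ℓ)) / Real.sqrt (lam ℓ)) ^ 2 * (1 + lam ℓ)
      ≤ ((lam ℓ ^ (1 - q))⁻¹ * (t ^ q) ^ 2) * (2 * lam ℓ) :=
        mul_le_mul hinterp (by linarith) (by linarith) (by positivity)
    _ = 2 * (t ^ q) ^ 2 * (lam ℓ / lam ℓ ^ (1 - q)) := by ring
    _ = 2 * (t ^ q) ^ 2 * lam ℓ ^ q := by rw [← hpow]
    _ ≤ 2 * ((t ^ q) ^ 2 * (1 + lam ℓ) ^ q) := by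
        have h2 : lam ℓ ^ q ≤ (1 + lam ℓ) ^ q :=
          Real.rpow_le_rpow hlam0.le (by linarith) hq0
        calc 2 * (t ^ q) ^ 2 * lam ℓ ^ q ≤ 2 * (t ^ q) ^ 2 * (1 + lam ℓ) ^ q :=
            mul_le_mul_of_nonneg_left h2 (by positivity)
          _ = 2 * ((t ^ q) ^ 2 * (1 + lam ℓ) ^ q) := by ring

private lemma t_sq_bound {T q t : ℝ} (hq0 : 0 ≤ q) (hq1 : q ≤ 1) (ht0 : 0 ≤ t) (htT : t ≤ T) :
    t ^ 2 ≤ (max 1 T) ^ 2 * (t ^ q) ^ 2 := by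
  rcases eq_or_lt_of_le ht0 with h | ht
  · rw [← h]; norm_num; positivity
  · have hM1 : (1 : ℝ) ≤ max 1 T := le_max_left _ _
    have h1 : t ^ (1 - q) ≤ max 1 T := by
      calc t ^ (1 - q) ≤ (max 1 T) ^ (1 - q) :=
          Real.rpow_le_rpow ht0 (htT.trans (le_max_right _ _)) (by linarith)
        _ ≤ (max 1 T) ^ (1 : ℝ) := Real.rpow_le_rpow_of_exponent_le hM1 (by linarith)
        _ = max 1 T := Real.rpow_one _
    have ht' : t = t ^ (1 - q) * t ^ q := by
      rw [← Real.rpow_add ht, show (1 - q) + q = 1 by ring, Real.rpow_one]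
    calc t ^ 2 = (t ^ (1 - q)) ^ 2 * (t ^ q) ^ 2 := by rw [← mul_pow, ← ht']
      _ ≤ (max 1 T) ^ 2 * (t ^ q) ^ 2 :=
          mul_le_mul_of_nonneg_right (pow_le_pow_left₀ (Real.rpow_nonneg ht0 _) h1 2)
            (sq_nonneg _)

set_option maxHeartbeats 1000000 in
private lemma mode_key (T s q t : ℝ) (hT : 0 < T) (hq0 : 0 ≤ q) (hq1 : q ≤ 1)
    (ht0 : 0 ≤ t) (htT : t ≤ T) (ℓ : ℕ) (x y : ℂ) :
    (1 + lam ℓ) ^ s *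
        ‖(↑(Real.cos (t * Real.sqrt (lam ℓ)) - 1) : ℂ) * x +
          (↑(if ℓ = 0 then t else Real.sin (t * Real.sqrt (lam ℓ)) / Real.sqrt (lam ℓ)) : ℂ) * y‖ ^ 2 +
      (1 + lam ℓ) ^ (s - 1) *
        ‖(↑(-(Real.sqrt (lam ℓ) * Real.sin (t * Real.sqrt (lam ℓ)))) : ℂ) * x +
          (↑(Real.cos (t * Real.sqrt (lam ℓ)) - 1) : ℂ) * y‖ ^ 2 ≤
    (max 4 (2 * T)) ^ 2 * (t ^ q) ^ 2 *
      ((1 + lam ℓ) ^ (s + q) * ‖x‖ ^ 2 + (1 + lam ℓ) ^ (s + q - 1) * ‖y‖ ^ 2) := by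
  have hlam0 : (0 : ℝ) ≤ lam ℓ := lam_nonneg ℓ
  have hL0 : (0 : ℝ) < 1 + lam ℓ := by linarith
  set C : ℝ := max 4 (2 * T) with hCdef
  have hC4 : (4 : ℝ) ≤ C := le_max_left _ _
  have hC0 : (0 : ℝ) ≤ C := by linarith
  have hC16 : (16 : ℝ) ≤ C ^ 2 := by nlinarith
  set P : ℝ := (t ^ q) ^ 2 with hPdef
  have hP0 : (0 : ℝ) ≤ P := sq_nonneg _
  set c : ℝ := Real.cos (t * Real.sqrt (lam ℓ)) - 1 with hcdef
  set g : ℝ := if ℓ = 0 then t else Real.sin (t * Real.sqrt (lam ℓ)) / Real.sqrt (lam ℓ)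
    with hgdef
  set L : ℝ := 1 + lam ℓ with hLdef
  have hLq0 : (0 : ℝ) ≤ L ^ q := Real.rpow_nonneg hL0.le q
  have hc2 : c ^ 2 ≤ 4 * (P * L ^ q) := cos_term_bound hq0 hq1 ht0 ℓ
  have hh2 : (Real.sqrt (lam ℓ) * Real.sin (t * Real.sqrt (lam ℓ))) ^ 2 =
      lam ℓ * Real.sin (t * Real.sqrt (lam ℓ)) ^ 2 := by
    rw [mul_pow, Real.sq_sqrt hlam0]
  have hLL : L ^ (1 + q) = L * L ^ q := by rw [Real.rpow_add hL0, Real.rpow_one]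
  have E1 : 2 * c ^ 2 * L +
      2 * (Real.sqrt (lam ℓ) * Real.sin (t * Real.sqrt (lam ℓ))) ^ 2 ≤
      C ^ 2 * P * L ^ (1 + q) := by
    have hsin : lam ℓ * Real.sin (t * Real.sqrt (lam ℓ)) ^ 2 ≤ P * L ^ (1 + q) :=
      sin_term_bound hq0 hq1 ht0 ℓ
    have hcL : c ^ 2 * L ≤ 4 * (P * L ^ q) * L := mul_le_mul_of_nonneg_right hc2 hL0.le
    have h10 : 10 * (P * L ^ (1 + q)) ≤ C ^ 2 * (P * L ^ (1 + q)) :=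
      mul_le_mul_of_nonneg_right (by linarith) (by positivity)
    rw [hh2]
    nlinarith [hsin, hcL, h10, hLL]
  have E2 : 2 * g ^ 2 * L + 2 * c ^ 2 ≤ C ^ 2 * P * L ^ q := by
    by_cases hℓ : ℓ = 0
    · subst hℓ
      have hl0 : lam 0 = 0 := by simp [lam]
      have hc0 : c = 0 := by
        rw [hcdef, hl0, Real.sqrt_zero, mul_zero, Real.cos_zero, sub_self]
      have hg0 : g = t := by rw [hgdef, if_pos rfl]
      have hL1 : L = 1 := by rw [hLdef, hl0, add_zero]
      rw [hc0, hg0, hL1, Real.one_rpow]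
      set M : ℝ := max 1 T with hMdef
      have hM1 : (1 : ℝ) ≤ M := le_max_left _ _
      have h2M : 2 * M ≤ C := by
        rcases le_total 1 T with h | h
        · rw [hMdef, max_eq_right h]; exact le_max_right _ _
        · rw [hMdef, max_eq_left h]; linarith
      have h4M : 4 * M ^ 2 ≤ C ^ 2 := by nlinarith
      have htsq : t ^ 2 ≤ M ^ 2 * P := t_sq_bound hq0 hq1 ht0 htT
      have h2 : 2 * M ^ 2 * P ≤ C ^ 2 * P :=
        mul_le_mul_of_nonneg_right (by nlinarith) hP0
      nlinarith
    · have hg : g ^ 2 * L ≤ 2 * (P * L ^ q) := by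
        rw [hgdef, if_neg hℓ]
        exact sinc_term_bound hq0 hq1 ht0 hℓ
      have h12 : 12 * (P * L ^ q) ≤ C ^ 2 * (P * L ^ q) :=
        mul_le_mul_of_nonneg_right (by linarith) (by positivity)
      nlinarith [hg, hc2, h12]
  -- combine
  have hA := norm_combo_sq_le c g x y
  have hB := norm_combo_sq_le (-(Real.sqrt (lam ℓ) * Real.sin (t * Real.sqrt (lam ℓ)))) c x y
  have hr1 : L ^ (s - 1) * L ^ (1 + q) = L ^ (s + q) := by
    rw [← Real.rpow_add hL0, show s - 1 + (1 + q) = s + q by ring]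
  have hr2 : L ^ (s - 1) * L ^ q = L ^ (s + q - 1) := by
    rw [← Real.rpow_add hL0, show s - 1 + q = s + q - 1 by ring]
  have hr3 : L ^ (s - 1) * L = L ^ s := by
    nth_rewrite 2 [← Real.rpow_one L]
    rw [← Real.rpow_add hL0, show s - 1 + 1 = s by ring]
  have hs0 : (0 : ℝ) ≤ L ^ s := Real.rpow_nonneg hL0.le s
  have hs1 : (0 : ℝ) ≤ L ^ (s - 1) := Real.rpow_nonneg hL0.le (s - 1)
  calc L ^ s * ‖(c : ℂ) * x + (g : ℂ) * y‖ ^ 2 +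
        L ^ (s - 1) * ‖(↑(-(Real.sqrt (lam ℓ) * Real.sin (t * Real.sqrt (lam ℓ)))) : ℂ) * x +
          (c : ℂ) * y‖ ^ 2
      ≤ L ^ s * (2 * c ^ 2 * ‖x‖ ^ 2 + 2 * g ^ 2 * ‖y‖ ^ 2) +
        L ^ (s - 1) *
          (2 * (-(Real.sqrt (lam ℓ) * Real.sin (t * Real.sqrt (lam ℓ)))) ^ 2 * ‖x‖ ^ 2 +
            2 * c ^ 2 * ‖y‖ ^ 2) :=
        add_le_add (mul_le_mul_of_nonneg_left hA hs0) (mul_le_mul_of_nonneg_left hB hs1)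
    _ = (2 * c ^ 2 * L +
          2 * (Real.sqrt (lam ℓ) * Real.sin (t * Real.sqrt (lam ℓ))) ^ 2) *
            L ^ (s - 1) * ‖x‖ ^ 2 +
        (2 * g ^ 2 * L + 2 * c ^ 2) * L ^ (s - 1) * ‖y‖ ^ 2 := by
        rw [← hr3]; ring
    _ ≤ C ^ 2 * P * L ^ (1 + q) * L ^ (s - 1) * ‖x‖ ^ 2 +
        C ^ 2 * P * L ^ q * L ^ (s - 1) * ‖y‖ ^ 2 :=
        add_le_add
          (mul_le_mul_of_nonneg_right (mul_le_mul_of_nonneg_right E1 hs1) (sq_nonneg _))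
          (mul_le_mul_of_nonneg_right (mul_le_mul_of_nonneg_right E2 hs1) (sq_nonneg _))
    _ = C ^ 2 * P * (L ^ (s + q) * ‖x‖ ^ 2 + L ^ (s + q - 1) * ‖y‖ ^ 2) := by
        rw [← hr1, ← hr2]; ring

private lemma lam_nonneg' (ℓ : ℕ) : (0:ℝ) ≤ lam ℓ := by unfold lam; positivity

private lemma term_nonneg (r : ℝ) (ℓ : ℕ) (z : ℂ) : 0 ≤ (1 + lam ℓ) ^ r * ‖z‖ ^ 2 :=
  mul_nonneg (Real.rpow_nonneg (by have := lam_nonneg' ℓ; linarith) _) (sq_nonneg _)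


/-- Lemma 2.2, group estimate:
`‖(E(t) - I)X‖_{ℍ^s} ≤ max(4, 2T) t^q ‖X‖_{ℍ^{s+q}}` for `q ∈ [0,1]`, `t ∈ [0,T]`. -/
theorem waveGroup_sub_id_hnormPair_le (T : ℝ) (hT : 0 < T) (s q t : ℝ)
    (hq : q ∈ Set.Icc (0 : ℝ) 1) (ht : t ∈ Set.Icc (0 : ℝ) T)
    (X : Coef × Coef) (hX : memHPair (s + q) X) :
    hnormPair s (waveGroup t X - X) ≤ max 4 (2 * T) * t ^ q * hnormPair (s + q) X := by
  obtain ⟨hq0, hq1⟩ := hq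
  obtain ⟨ht0, htT⟩ := ht
  obtain ⟨hu, hv⟩ := hX
  set C : ℝ := max 4 (2 * T) with hCdef
  have hC0 : (0 : ℝ) ≤ C := le_trans (by norm_num) (le_max_left _ _)
  have htq0 : (0 : ℝ) ≤ t ^ q := Real.rpow_nonneg ht0 q
  set Y : Coef × Coef := waveGroup t X - X with hYdef
  set K : ℝ := C ^ 2 * (t ^ q) ^ 2 with hKdef
  -- component identities
  have ha : ∀ ℓ (m : Fin (2 * ℓ + 1)), Y.1 ℓ m =
      (↑(Real.cos (t * Real.sqrt (lam ℓ)) - 1) : ℂ) * X.1 ℓ m +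
        (↑(if ℓ = 0 then t else Real.sin (t * Real.sqrt (lam ℓ)) / Real.sqrt (lam ℓ)) : ℂ) *
          X.2 ℓ m := by
    intro ℓ m
    show cosOp t X.1 ℓ m + sincOp t X.2 ℓ m - X.1 ℓ m = _
    by_cases h0 : ℓ = 0
    · simp only [cosOp, sincOp, h0, if_true, reduceIte]
      push_cast
      ring
    · simp only [cosOp, sincOp, h0, if_false, reduceIte]
      push_cast
      ring
  have hb : ∀ ℓ (m : Fin (2 * ℓ + 1)), Y.2 ℓ m =
      (↑(-(Real.sqrt (lam ℓ) * Real.sin (t * Real.sqrt (lam ℓ)))) : ℂ) * X.1 ℓ m +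
        (↑(Real.cos (t * Real.sqrt (lam ℓ)) - 1) : ℂ) * X.2 ℓ m := by
    intro ℓ m
    show -sqrtSinOp t X.1 ℓ m + cosOp t X.2 ℓ m - X.2 ℓ m = _
    simp only [sqrtSinOp, cosOp]
    push_cast
    ring
  -- the four series
  set F : ℕ → ℝ := fun ℓ => ∑ m : Fin (2 * ℓ + 1), (1 + lam ℓ) ^ s * ‖Y.1 ℓ m‖ ^ 2 with hF
  set G : ℕ → ℝ :=
    fun ℓ => ∑ m : Fin (2 * ℓ + 1), (1 + lam ℓ) ^ (s - 1) * ‖Y.2 ℓ m‖ ^ 2 with hG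
  set U : ℕ → ℝ :=
    fun ℓ => ∑ m : Fin (2 * ℓ + 1), (1 + lam ℓ) ^ (s + q) * ‖X.1 ℓ m‖ ^ 2 with hU
  set V : ℕ → ℝ :=
    fun ℓ => ∑ m : Fin (2 * ℓ + 1), (1 + lam ℓ) ^ (s + q - 1) * ‖X.2 ℓ m‖ ^ 2 with hV
  have hFG : ∀ ℓ, F ℓ + G ℓ ≤ K * (U ℓ + V ℓ) := by
    intro ℓ
    rw [hF, hG, hU, hV]
    simp only
    rw [← Finset.sum_add_distrib, ← Finset.sum_add_distrib, Finset.mul_sum]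
    refine Finset.sum_le_sum fun m _ => ?_
    rw [ha ℓ m, hb ℓ m]
    exact mode_key T s q t hT hq0 hq1 ht0 htT ℓ (X.1 ℓ m) (X.2 ℓ m)
  have hUsum : Summable U := hu
  have hVsum : Summable V := hv
  have hWsum : Summable (fun ℓ => K * (U ℓ + V ℓ)) := (hUsum.add hVsum).mul_left K
  have hF0 : ∀ ℓ, 0 ≤ F ℓ := fun ℓ => Finset.sum_nonneg fun m _ => term_nonneg _ _ _
  have hG0 : ∀ ℓ, 0 ≤ G ℓ := fun ℓ => Finset.sum_nonneg fun m _ => term_nonneg _ _ _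
  have hFsum : Summable F :=
    Summable.of_nonneg_of_le hF0
      (fun ℓ => (le_add_of_nonneg_right (hG0 ℓ)).trans (hFG ℓ)) hWsum
  have hGsum : Summable G :=
    Summable.of_nonneg_of_le hG0
      (fun ℓ => (le_add_of_nonneg_left (hF0 ℓ)).trans (hFG ℓ)) hWsum
  have hmain : hnormPairSq s Y ≤ K * hnormPairSq (s + q) X := by
    have h1 : hnormPairSq s Y = ∑' ℓ, F ℓ + ∑' ℓ, G ℓ := rfl
    have h2 : hnormPairSq (s + q) X = ∑' ℓ, U ℓ + ∑' ℓ, V ℓ := rfl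
    rw [h1, h2, ← Summable.tsum_add hFsum hGsum, ← Summable.tsum_add hUsum hVsum, ← tsum_mul_left]
    exact Summable.tsum_le_tsum hFG (hFsum.add hGsum) hWsum
  have hS0 : 0 ≤ hnormPairSq (s + q) X := by
    have := Real.sqrt_nonneg (hnormPairSq (s + q) X)
    refine add_nonneg ?_ ?_ <;>
      exact tsum_nonneg fun ℓ => Finset.sum_nonneg fun m _ => term_nonneg _ _ _
  calc hnormPair s Y = Real.sqrt (hnormPairSq s Y) := rfl
    _ ≤ Real.sqrt (K * hnormPairSq (s + q) X) := Real.sqrt_le_sqrt hmain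
    _ = Real.sqrt ((C * t ^ q) ^ 2 * hnormPairSq (s + q) X) := by rw [hKdef, mul_pow]
    _ = (C * t ^ q) * Real.sqrt (hnormPairSq (s + q) X) := by
        rw [Real.sqrt_mul (sq_nonneg _), Real.sqrt_sq (mul_nonneg hC0 htq0)]
    _ = C * t ^ q * hnormPair (s + q) X := rfl
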